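/- For every base b ≥ 2, the language P_b of base-b representations of primes is not regular. -/

import Mathlib

/-- The base-`b` representation of `m`, most significant digit first. -/
def repr' (b m : ℕ) : List ℕ := (Nat.digits b m).reverse

/-- The language of base-`b` representations of primes. -/
def P (b : ℕ) : Language ℕ := {w | ∃ p : ℕ, Nat.Prime p ∧ w = repr' b p}

private lemma flatten_replicate_append (c : List ℕ) (k : ℕ) :
    (List.replicate k c).flatten ++ c = c ++ (List.replicate k c).flatten := by
  induction k with
  | zero => simp
  | succ k ih => simp only [List.replicate_succ, List.flatten_cons, List.append_assoc, ih]

private lemma flatten_replicate_reverse (y : List ℕ) (k : ℕ) :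
    ((List.replicate k y).flatten).reverse = (List.replicate k y.reverse).flatten := by
  induction k with
  | zero => simp
  | succ k ih =>
    simp only [List.replicate_succ, List.flatten_cons, List.reverse_append, ih]
    rw [flatten_replicate_append]

/-- For every base `b ≥ 2`, the language of base-`b` representations of primes is
not regular. -/
theorem primes_not_regular (b : ℕ) (hb : 2 ≤ b) : ¬ (P b).IsRegular := by
  rintro ⟨σ, hσ, M, hM⟩
  set n := Fintype.card σ with hn
  have hb1 : 1 < b := hb
  -- pick a prime q with more than n digits
  obtain ⟨q, hqge, hq⟩ := Nat.exists_infinite_primes (b ^ n + 1)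
  haveI : Fact q.Prime := ⟨hq⟩
  have hbnq : b ^ n < q := hqge
  have hwmem : repr' b q ∈ M.accepts := by
    rw [hM]; exact ⟨q, hq, rfl⟩
  have hlenw : n ≤ (repr' b q).length := by
    have h1 : q < b ^ (Nat.digits b q).length := Nat.lt_base_pow_length_digits hb1
    have : b ^ n < b ^ (Nat.digits b q).length := lt_trans hbnq h1
    have := (Nat.pow_lt_pow_iff_right hb1).mp this
    simpa [repr'] using this.le
  obtain ⟨x, y, z, hw, hxy, hy, hpump⟩ := M.pumping_lemma hwmem hlenw
  set t := y.length with ht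
  have htpos : 0 < t := List.length_pos_iff.mpr hy
  have htn : t ≤ n := le_trans (Nat.le_add_left _ _) hxy
  -- the pumped words
  set u : ℕ → List ℕ := fun k => x ++ (List.replicate k y).flatten ++ z with hu
  have humem : ∀ k, u k ∈ M.accepts := by
    intro k
    apply hpump
    refine ⟨x ++ (List.replicate k y).flatten, ?_, z, rfl, rfl⟩
    exact ⟨x, rfl, (List.replicate k y).flatten,
      Language.join_mem_kstar (fun w hw => List.eq_of_mem_replicate hw), rfl⟩
  -- values of the pumped words
  set val : ℕ → ℕ := fun k => Nat.ofDigits b (u k).reverse with hval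
  have hval_prime : ∀ k, (val k).Prime ∧ Nat.digits b (val k) = (u k).reverse := by
    intro k
    have := humem k
    rw [hM] at this
    obtain ⟨p, hp, hrepr⟩ := this
    have hvp : val k = p := by
      simp only [hval, hrepr, repr', List.reverse_reverse, Nat.ofDigits_digits]
    rw [hvp]
    exact ⟨hp, by rw [hrepr, repr', List.reverse_reverse]⟩
  -- u 1 = original word
  have hu1 : u 1 = repr' b q := by simp only [hu]; rw [hw]; simp
  have hval1 : val 1 = q := by
    simp only [hval, hu1, repr', List.reverse_reverse, Nat.ofDigits_digits]
  -- explicit value formula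
  set X : ℕ := Nat.ofDigits b x.reverse with hX
  set Y : ℕ := Nat.ofDigits b y.reverse with hY
  set Z : ℕ := Nat.ofDigits b z.reverse with hZ
  set J : ℕ → ℕ := fun k => Nat.ofDigits b (List.replicate k y.reverse).flatten with hJ
  have hJlen : ∀ k, ((List.replicate k y.reverse).flatten).length = t * k := by
    intro k; simp [List.length_flatten, mul_comm, ht]
  have hJsucc : ∀ k, J (k + 1) = Y + b ^ t * J k := by
    intro k
    simp only [hJ, List.replicate_succ, List.flatten_cons, Nat.ofDigits_append,
      List.length_reverse, hY, ht]
  have hvalf : ∀ k, val k = Z + b ^ z.length * (J k + b ^ (t * k) * X) := by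
    intro k
    simp only [hval, hu, List.reverse_append, Nat.ofDigits_append, List.length_reverse,
      flatten_replicate_reverse, hJlen, List.length_append, hJ, hZ, hX]
  -- now work modulo q
  set β : ZMod q := (b : ZMod q) with hβ
  have hbq : b < q := lt_of_le_of_lt (le_trans (Nat.le_self_pow (by positivity) b)
      (Nat.pow_le_pow_right (le_trans one_le_two hb) htn)) hbnq
  have hβ0 : β ≠ 0 := by
    rw [hβ, Ne, ZMod.natCast_eq_zero_iff]
    intro hdvd
    exact absurd (Nat.le_of_dvd (by omega) hdvd) (by omega)
  have hbt : b ^ t < q := lt_of_le_of_lt (Nat.pow_le_pow_right (by omega) htn) hbnq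
  have hβt1 : β ^ t - 1 ≠ 0 := by
    rw [sub_ne_zero]
    intro h
    have h2 : ((b ^ t - 1 : ℕ) : ZMod q) = 0 := by
      have h1t : 1 ≤ b ^ t := Nat.one_le_pow _ _ (by omega)
      push_cast [h1t]
      rw [← hβ, h]; ring
    rw [ZMod.natCast_eq_zero_iff] at h2
    have := Nat.le_of_dvd (by have := Nat.one_lt_pow htpos.ne' hb1; omega) h2
    omega
  have hJmod : ∀ k, (β ^ t - 1) * ((J k : ℕ) : ZMod q) = (Y : ZMod q) * (β ^ (t * k) - 1) := by
    intro k
    induction k with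
    | zero => simp [hJ, Nat.ofDigits]
    | succ k ih =>
      rw [hJsucc k]
      push_cast [← hβ]
      rw [mul_add_one t k, pow_add]
      push_cast [← hβ] at ih
      linear_combination β ^ t * ih
  -- Fermat
  have hfermat : β ^ (q - 1) = 1 := ZMod.pow_card_sub_one_eq_one hβ0
  have hpowq : β ^ (t * q) = β ^ (t * 1) := by
    have : t * q = t * (q - 1) + t := by
      have := hq.two_le; cases q with
      | zero => omega
      | succ m => simp [Nat.succ_sub_one]; ring
    rw [this, pow_add, mul_comm t (q - 1), pow_mul, hfermat, one_pow, one_mul, mul_one]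
  -- key congruence : val q ≡ val 1 [MOD q]
  have hkey : ((val q : ℕ) : ZMod q) = ((val 1 : ℕ) : ZMod q) := by
    apply mul_left_cancel₀ hβt1
    rw [hvalf q, hvalf 1]
    push_cast [← hβ]
    have h1 := hJmod q
    have h2 := hJmod 1
    rw [hpowq] at h1 ⊢
    linear_combination (β ^ z.length) * h1 - (β ^ z.length) * h2
  have hdvd : q ∣ val q := by
    rw [← ZMod.natCast_eq_zero_iff, hkey, hval1, ZMod.natCast_self]
  obtain ⟨hvq_prime, hvq_digits⟩ := hval_prime q
  have heq : q = val q := (Nat.prime_dvd_prime_iff_eq hq hvq_prime).mp hdvd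
  -- contradiction via lengths
  have hlen_eq : (u q).length = (repr' b q).length := by
    have : Nat.digits b (val q) = Nat.digits b q := by rw [← heq]
    rw [hvq_digits] at this
    calc (u q).length = (u q).reverse.length := List.length_reverse.symm
      _ = (Nat.digits b q).length := by rw [this]
      _ = (repr' b q).length := List.length_reverse.symm
  rw [hw] at hlen_eq
  simp only [hu, List.length_append, List.length_flatten, List.map_replicate,
    List.sum_replicate, smul_eq_mul] at hlen_eq
  have hqt : q * y.length = y.length := by omega
  have hypos : 0 < y.length := List.length_pos_iff.mpr hy
  have hq1 : q = 1 := Nat.eq_of_mul_eq_mul_right hypos (by rw [one_mul]; exact hqt)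
  exact absurd hq1 hq.one_lt.ne'
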